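/- Let M be a Noetherian R-module. Then the following are equivalent for Spec^s(M) with the second classical Zariski topology: (a) it is a Hausdorff space; (b) it is a T1-space; (c) it is the cofinite topology; (d) it is discrete; (e) either Spec^s(M) = ∅ or Spec^s(M) = Min(M), the set of all minimal submodules of M. -/

import Mathlib

open Pointwise

variable (R M : Type*) [CommRing R] [AddCommGroup M] [Module R M]

/-- A nonzero submodule `S` is *second* if for every `r : R`, `r • S = S` or `r • S = ⊥`. -/
def IsSecondSubmodule (S : Submodule R M) : Prop :=
  S ≠ ⊥ ∧ ∀ r : R, r • S = S ∨ r • S = ⊥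

/-- The second spectrum of `M`: the collection of all second submodules of `M`. -/
def SecondSpec : Type _ := {S : Submodule R M // IsSecondSubmodule R M S}

/-- `V^{s*}(N)`: the set of second submodules contained in `N`. -/
def Vs (N : Submodule R M) : Set (SecondSpec R M) := {S | S.1 ≤ N}

/-- `W^s(N)`: the complement of `V^{s*}(N)` in `Spec^s(M)`. -/
def Ws (N : Submodule R M) : Set (SecondSpec R M) := (Vs R M N)ᶜ

/-- The second classical Zariski topology on `Spec^s(M)`, generated by the
sub-basis `{W^s(N) : N ≤ M}`. -/
instance secondZariski : TopologicalSpace (SecondSpec R M) :=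
  TopologicalSpace.generateFrom {U | ∃ N : Submodule R M, U = Ws R M N}

/-- The second socle of a submodule `N`: the sum of all second submodules of `M`
contained in `N`. -/
def secSocle (N : Submodule R M) : Submodule R M :=
  sSup {S : Submodule R M | IsSecondSubmodule R M S ∧ S ≤ N}

variable {R M}

lemma mem_psmul_iff {a : R} {S : Submodule R M} {x : M} :
    x ∈ a • S ↔ ∃ y ∈ S, a • y = x := by
  rw [← SetLike.mem_coe, Submodule.coe_pointwise_smul]
  exact Set.mem_smul_set

lemma psmul_le_self (a : R) (S : Submodule R M) : a • S ≤ S := by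
  intro x hx
  obtain ⟨y, hy, rfl⟩ := mem_psmul_iff.1 hx
  exact S.smul_mem a hy

lemma atom_span {A : Submodule R M} (hA : IsAtom A) {x : M} (hx : x ∈ A) (hx0 : x ≠ 0) :
    Submodule.span R {x} = A := by
  have h1 : Submodule.span R {x} ≤ A := (Submodule.span_singleton_le_iff_mem x A).2 hx
  rcases h1.lt_or_eq with h | h
  · exact absurd (hA.2 _ h) (by simpa [Submodule.span_singleton_eq_bot] using hx0)
  · exact h

lemma atom_second {A : Submodule R M} (hA : IsAtom A) : IsSecondSubmodule R M A := by
  refine ⟨hA.1, fun r => ?_⟩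
  rcases (psmul_le_self r A).lt_or_eq with h | h
  · exact Or.inr (hA.2 _ h)
  · exact Or.inl h

lemma atom_le_atom {A B : Submodule R M} (hA : IsAtom A) (hB : IsAtom B) (h : A ≤ B) : A = B := by
  rcases h.lt_or_eq with h | h
  · exact absurd (hB.2 _ h) hA.1
  · exact h

/-- "Maximality" of the annihilator of an atom. -/
lemma atom_max {B : Submodule R M} (hB : IsAtom B) {r : R} (hr : r • B = B) :
    ∃ s : R, (1 - s * r) • B = ⊥ := by
  obtain ⟨x, hxB, hx0⟩ := (Submodule.ne_bot_iff B).1 hB.1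
  have hspan : Submodule.span R {x} = B := atom_span hB hxB hx0
  have hrx0 : r • x ≠ 0 := by
    intro h0
    apply hB.1
    have : B = Submodule.span R {r • x} := by
      rw [← hr, ← hspan, Submodule.smul_span, Set.smul_set_singleton]
    rw [this, h0, Submodule.span_zero_singleton]
  have hrxB : r • x ∈ B := B.smul_mem r hxB
  have hxmem : x ∈ Submodule.span R {r • x} := by
    rw [atom_span hB hrxB hrx0]; exact hxB
  obtain ⟨s, hs⟩ := Submodule.mem_span_singleton.1 hxmem
  refine ⟨s, ?_⟩
  have hz : (1 - s * r) • x = 0 := by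
    rw [sub_smul, one_smul, mul_smul, hs, sub_self]
  rw [← hspan, Submodule.smul_span, Set.smul_set_singleton, hz,
    Submodule.span_zero_singleton]

/-- In a Noetherian module, a nonzero submodule of a second submodule is second. -/
lemma second_of_le [IsNoetherian R M] {S T : Submodule R M} (hS : IsSecondSubmodule R M S)
    (hT : T ≠ ⊥) (hle : T ≤ S) : IsSecondSubmodule R M T := by
  refine ⟨hT, fun r => ?_⟩
  rcases hS.2 r with h | h
  · left
    refine le_antisymm (psmul_le_self r T) ?_
    -- the preimage chain
    have hmono : ∀ n, S ⊓ T.comap (DistribMulAction.toLinearMap R M (r ^ n)) ≤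
        S ⊓ T.comap (DistribMulAction.toLinearMap R M (r ^ (n + 1))) := by
      intro n z hz
      refine ⟨hz.1, ?_⟩
      have hzT : (r ^ n) • z ∈ T := hz.2
      have : (r ^ (n + 1)) • z = r • ((r ^ n) • z) := by rw [pow_succ', mul_smul]
      show (r ^ (n + 1)) • z ∈ T
      rw [this]
      exact T.smul_mem r hzT
    set f : ℕ →o Submodule R M :=
      ⟨fun n => S ⊓ T.comap (DistribMulAction.toLinearMap R M (r ^ n)),
        monotone_nat_of_le_succ hmono⟩ with hf
    obtain ⟨n, hn⟩ := monotone_stabilizes_iff_noetherian.mpr ‹IsNoetherian R M› f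
    have hpow : ∀ k : ℕ, (r ^ k) • S = S := by
      intro k
      induction k with
      | zero => rw [pow_zero, one_smul]
      | succ k ih => rw [pow_succ, mul_smul, h, ih]
    intro t ht
    have htS : t ∈ (r ^ (n + 1)) • S := by rw [hpow]; exact hle ht
    obtain ⟨y, hyS, hy⟩ := mem_psmul_iff.1 htS
    have hy1 : y ∈ f (n + 1) := by
      refine ⟨hyS, ?_⟩
      show (r ^ (n + 1)) • y ∈ T
      rw [hy]; exact ht
    have hy0 : y ∈ f n := by rw [hn (n + 1) (Nat.le_succ n)]; exact hy1
    have hrny : (r ^ n) • y ∈ T := hy0.2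
    have : t = r • ((r ^ n) • y) := by rw [← hy, pow_succ', mul_smul]
    rw [this]
    exact Submodule.smul_mem_pointwise_smul _ r T hrny
  · right
    have h1 : r • T ≤ r • S := by
      intro x hx
      obtain ⟨y, hy, rfl⟩ := mem_psmul_iff.1 hx
      exact Submodule.smul_mem_pointwise_smul y r S (hle hy)
    rw [h] at h1
    exact le_bot_iff.1 h1

lemma Ws_open (N : Submodule R M) : IsOpen (Ws R M N) :=
  TopologicalSpace.isOpen_generateFrom_of_mem ⟨N, rfl⟩

lemma Vs_closed (N : Submodule R M) : IsClosed (Vs R M N) := by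
  rw [← isOpen_compl_iff]
  exact Ws_open N

lemma open_basis {U : Set (SecondSpec R M)} (hU : IsOpen U) :
    ∀ x ∈ U, ∃ F : Finset (Submodule R M), (∀ N ∈ F, x ∈ Ws R M N) ∧
      ∀ y : SecondSpec R M, (∀ N ∈ F, y ∈ Ws R M N) → y ∈ U := by
  have hU' : TopologicalSpace.GenerateOpen {U | ∃ N : Submodule R M, U = Ws R M N} U := hU
  clear hU
  induction hU' with
  | basic V hV =>
    obtain ⟨N, rfl⟩ := hV
    intro x hx
    exact ⟨{N}, by simp [hx], by simp⟩
  | univ => exact fun x _ => ⟨∅, by simp, by simp⟩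
  | inter V W _ _ ihV ihW =>
    intro x hx
    obtain ⟨F1, h1, h1'⟩ := ihV x hx.1
    obtain ⟨F2, h2, h2'⟩ := ihW x hx.2
    classical
    refine ⟨F1 ∪ F2, fun N hN => ?_, fun y hy => ?_⟩
    · rcases Finset.mem_union.1 hN with h | h
      · exact h1 N h
      · exact h2 N h
    · exact ⟨h1' y fun N hN => hy N (Finset.mem_union_left _ hN),
        h2' y fun N hN => hy N (Finset.mem_union_right _ hN)⟩
  | sUnion S _ ih =>
    intro x hx
    obtain ⟨V, hVS, hxV⟩ := hx
    obtain ⟨F, h, h'⟩ := ih V hVS x hxV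
    exact ⟨F, h, fun y hy => ⟨V, hVS, h' y hy⟩⟩

lemma t1_to_atoms [IsNoetherian R M] (h : T1Space (SecondSpec R M)) {S : Submodule R M}
    (hS : IsSecondSubmodule R M S) : IsAtom S := by
  refine ⟨hS.1, fun T hT => ?_⟩
  by_contra hT0
  have hTsec : IsSecondSubmodule R M T := second_of_le hS hT0 hT.le
  set s : SecondSpec R M := ⟨S, hS⟩
  set t : SecondSpec R M := ⟨T, hTsec⟩
  have hne : t ≠ s := fun he => hT.ne (congrArg Subtype.val he)
  have hop : IsOpen ({s}ᶜ : Set (SecondSpec R M)) := (isClosed_singleton).isOpen_compl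
  obtain ⟨F, h1, h2⟩ := open_basis hop t (by simpa using hne)
  have hnot : ¬ ∀ N ∈ F, s ∈ Ws R M N := by
    intro hall
    exact (h2 s hall) rfl
  push_neg at hnot
  obtain ⟨N, hNF, hsN⟩ := hnot
  have hsVs : S ≤ N := not_not.1 hsN
  exact (h1 N hNF) (hT.le.trans hsVs)

lemma exists_killer [IsNoetherian R M]
    (ha : {S : Submodule R M | IsSecondSubmodule R M S} = {S : Submodule R M | IsAtom S})
    {A B : Submodule R M} (hA : IsAtom A) (hB : IsAtom B) (hne : A ≠ B) :
    ∃ r : R, r • B = ⊥ ∧ r • A = A := by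
  by_contra hcon
  push_neg at hcon
  have hAs := atom_second hA
  have hBs := atom_second hB
  have hBA : ∀ r : R, r • B = ⊥ → r • A = ⊥ := fun r h =>
    (hAs.2 r).resolve_left (hcon r h)
  have hAB : ∀ r : R, r • A = ⊥ → r • B = ⊥ := by
    intro r h
    rcases hBs.2 r with hB' | hB'
    · obtain ⟨s, hs⟩ := atom_max hB hB'
      have h1 : (1 - s * r) • A = ⊥ := hBA _ hs
      have h2 : (s * r) • A = ⊥ := by rw [mul_smul, h, Submodule.smul_bot']
      exfalso
      apply hA.1
      refine (Submodule.eq_bot_iff A).2 fun x hx => ?_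
      have e1 : (1 - s * r) • x = 0 := by
        have := Submodule.smul_mem_pointwise_smul x (1 - s * r) A hx
        rwa [h1, Submodule.mem_bot] at this
      have e2 : (s * r) • x = 0 := by
        have := Submodule.smul_mem_pointwise_smul x (s * r) A hx
        rwa [h2, Submodule.mem_bot] at this
      calc x = (1 - s * r) • x + (s * r) • x := by
              rw [← add_smul, sub_add_cancel, one_smul]
        _ = 0 := by rw [e1, e2, add_zero]
    · exact hB'
  have hsup : IsSecondSubmodule R M (A ⊔ B) := by
    refine ⟨fun h0 => hA.1 (le_bot_iff.1 (h0 ▸ le_sup_left)), fun r => ?_⟩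
    rcases hAs.2 r with h | h
    · left
      have hrB : r • B = B := by
        rcases hBs.2 r with h' | h'
        · exact h'
        · exact absurd (hBA r h' ▸ h) fun hh => hA.1 hh.symm
      rw [Submodule.smul_sup', h, hrB]
    · right
      rw [Submodule.smul_sup', h, hAB r h, bot_sup_eq]
  have hatom : IsAtom (A ⊔ B) := (Set.ext_iff.1 ha _).1 hsup
  have h1 : A = A ⊔ B := atom_le_atom hA hatom le_sup_left
  have h2 : B = A ⊔ B := atom_le_atom hB hatom le_sup_right
  exact hne (h1.trans h2.symm)

lemma atoms_finite [IsNoetherian R M]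
    (ha : {S : Submodule R M | IsSecondSubmodule R M S} = {S : Submodule R M | IsAtom S}) :
    {A : Submodule R M | IsAtom A}.Finite := by
  classical
  apply WellFoundedGT.finite_of_sSupIndep
  intro A hA
  have hA : IsAtom A := hA
  rw [disjoint_iff]
  by_contra hbot
  have hle : A ≤ sSup ({A' : Submodule R M | IsAtom A'} \ {A}) := by
    rcases (inf_le_left (a := A)
      (b := sSup ({A' : Submodule R M | IsAtom A'} \ {A}))).lt_or_eq with l | e
    · exact absurd (hA.2 _ l) hbot
    · exact inf_eq_left.mp e
  obtain ⟨x, hxA, hx0⟩ := (Submodule.ne_bot_iff A).1 hA.1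
  have hcomp := Submodule.singleton_span_isCompactElement (R := R) x
  rw [atom_span hA hxA hx0] at hcomp
  obtain ⟨F, hF, hleF⟩ := (CompleteLattice.isCompactElement_iff_exists_le_sSup_of_le_sSup _ _).1 hcomp _ hle
  have hpick : ∀ B ∈ F, ∃ r : R, r • B = ⊥ ∧ r • A = A := by
    intro B hB
    have hBmem := hF hB
    exact exists_killer ha hA hBmem.1 (fun he => hBmem.2 (by simp [he]))
  choose! r hr1 hr2 using hpick
  set p := ∏ B ∈ F, r B with hp
  have hpA : p • A = A :=
    Finset.prod_induction r (fun c => c • A = A)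
      (fun a b ha' hb' => by show (a*b) • A = A; rw [mul_smul, hb', ha']) (one_smul _ _) hr2
  have hpF : ∀ B ∈ F, p • B = ⊥ := by
    intro B hB
    rw [hp, ← Finset.prod_erase_mul F r hB, mul_smul, hr1 B hB, Submodule.smul_bot']
  have hbotle : A ≤ ⊥ := by
    have step1 : A ≤ p • (F.sup id) := by
      rw [← hpA]
      intro z hz
      obtain ⟨y, hy, rfl⟩ := mem_psmul_iff.1 hz
      exact Submodule.smul_mem_pointwise_smul y p _ (hleF hy)
    have step2 : p • (F.sup id) ≤ ⊥ := by
      intro z hz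
      obtain ⟨y, hy, rfl⟩ := mem_psmul_iff.1 hz
      have hK : F.sup id ≤ Submodule.comap (DistribMulAction.toLinearMap R M p) ⊥ := by
        refine Finset.sup_le fun B hB => ?_
        intro b hb
        show p • b ∈ (⊥ : Submodule R M)
        have : p • b ∈ p • B := Submodule.smul_mem_pointwise_smul b p B hb
        rwa [hpF B hB] at this
      exact hK hy
    exact step1.trans step2
  exact hA.1 (le_bot_iff.1 hbotle)

lemma five_imp [IsNoetherian R M]
    (h : ({S : Submodule R M | IsSecondSubmodule R M S} = ∅ ∨
      {S : Submodule R M | IsSecondSubmodule R M S} = {S : Submodule R M | IsAtom S})) :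
    Finite (SecondSpec R M) ∧ DiscreteTopology (SecondSpec R M) := by
  rcases h with h | h
  · have hempty : IsEmpty (SecondSpec R M) :=
      ⟨fun s => (Set.eq_empty_iff_forall_notMem.1 h) s.1 s.2⟩
    haveI := hempty
    exact ⟨inferInstance, inferInstance⟩
  · have hfin : {S : Submodule R M | IsSecondSubmodule R M S}.Finite := by
      rw [h]; exact atoms_finite h
    haveI : Finite (SecondSpec R M) := hfin.to_subtype
    have hatom : ∀ s : SecondSpec R M, IsAtom s.1 := fun s => (Set.ext_iff.1 h _).1 s.2
    haveI : T1Space (SecondSpec R M) := by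
      refine ⟨fun s => ?_⟩
      have hsingle : ({s} : Set (SecondSpec R M)) = Vs R M s.1 := by
        ext t
        simp only [Set.mem_singleton_iff]
        constructor
        · rintro rfl
          show t.1 ≤ t.1
          exact le_refl _
        · intro ht
          exact Subtype.ext (atom_le_atom (hatom t) (hatom s) ht)
      rw [hsingle]
      exact Vs_closed s.1
    exact ⟨inferInstance, inferInstance⟩

variable (R M)

/-- Thm 3.75: for a Noetherian module `M`, Hausdorff, T1, cofinite, discrete and
(`Spec^s(M) = ∅` or `Spec^s(M) = Min(M)`) are all equivalent for `Spec^s(M)`. -/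
theorem stmt10 [IsNoetherian R M] :
    List.TFAE
      [ T2Space (SecondSpec R M),
        T1Space (SecondSpec R M),
        (∀ U : Set (SecondSpec R M), IsOpen U ↔ (U = ∅ ∨ Uᶜ.Finite)),
        DiscreteTopology (SecondSpec R M),
        ({S : Submodule R M | IsSecondSubmodule R M S} = ∅ ∨
          {S : Submodule R M | IsSecondSubmodule R M S} = {S : Submodule R M | IsAtom S}) ] := by
  tfae_have 1 → 2 := by
    intro h
    exact T2Space.t1Space
  tfae_have 2 → 5 := by
    intro h
    right
    ext S
    exact ⟨fun hS => t1_to_atoms h hS, fun hS => atom_second hS⟩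
  tfae_have 5 → 4 := by
    intro h
    exact (five_imp h).2
  tfae_have 5 → 3 := by
    intro h
    obtain ⟨hfin, hdisc⟩ := five_imp h
    intro U
    constructor
    · intro _
      right
      exact Set.toFinite _
    · intro _
      exact isOpen_discrete U
  tfae_have 4 → 1 := by
    intro h
    exact DiscreteTopology.toT2Space
  tfae_have 3 → 2 := by
    intro h
    refine ⟨fun x => ?_⟩
    rw [← isOpen_compl_iff]
    refine (h _).2 (Or.inr ?_)
    rw [compl_compl]
    exact Set.finite_singleton x
  tfae_finish
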